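/- Soundness of syntactic subtyping: (1) if t ≤ u (as a circular derivation) then for all k and v, v ∈_k t implies v ∈_k u, hence t ⊆ u semantically; (2) if s ≤ r then for all k and e, e ∈_k s implies e ∈_k r, hence s ⊆ r semantically. -/

import Mathlib

namespace CBPV

abbrev Label := String
abbrev Var := String

-- Positive types (values); `name` refers to an equirecursively defined type name.
mutual
inductive PosTp : Type where
  | name : String → PosTp
  | str  : PosStr → PosTp

/-- Structural positive types. -/
inductive PosStr : Type where
  | tensor : PosTp → PosTp → PosStr
  | one    : PosStr
  | plus   : List (Label × PosTp) → PosStr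
  | down   : NegTp → PosStr

/-- Negative types (computations). -/
inductive NegTp : Type where
  | name : String → NegTp
  | str  : NegStr → NegTp

/-- Structural negative types. -/
inductive NegStr : Type where
  | arrow   : PosTp → NegTp → NegStr
  | withRec : List (Label × NegTp) → NegStr
  | up      : PosTp → NegStr
end

mutual
/-- Values. -/
inductive Val : Type where
  | var   : Var → Val
  | pair  : Val → Val → Val
  | unit  : Val
  | inj   : Label → Val → Val
  | thunk : Comp → Val

/-- Computations. -/
inductive Comp : Type where
  | lam       : Var → Comp → Comp
  | app       : Comp → Val → Comp
  | record    : List (Label × Comp) → Comp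
  | proj      : Comp → Label → Comp
  | ret       : Val → Comp
  | letret    : Var → Comp → Comp → Comp
  | name      : String → Comp
  | matchPair : Val → Var → Var → Comp → Comp
  | matchUnit : Val → Comp → Comp
  | matchSum  : Val → List (Label × Var × Comp) → Comp
  | force     : Val → Comp
end

/-- A global signature: equirecursive (contractive) type definitions `t = τ⁺`,
`s = σ⁻`, and recursive expression definitions `f : σ⁻ = e`. -/
structure Signature : Type where
  pos  : String → PosStr
  neg  : String → NegStr
  defs : String → NegTp × Comp

mutual
/-- Substitution of value `w` for variable `x` in a value. -/
def substV (w : Val) (x : Var) : Val → Val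
  | .var y => if y = x then w else .var y
  | .pair v₁ v₂ => .pair (substV w x v₁) (substV w x v₂)
  | .unit => .unit
  | .inj j v => .inj j (substV w x v)
  | .thunk e => .thunk (substC w x e)

/-- Substitution of value `w` for variable `x` in a computation. -/
def substC (w : Val) (x : Var) : Comp → Comp
  | .lam y e => .lam y (if y = x then e else substC w x e)
  | .app e v => .app (substC w x e) (substV w x v)
  | .record L => .record (substRec w x L)
  | .proj e j => .proj (substC w x e) j
  | .ret v => .ret (substV w x v)
  | .letret y e₁ e₂ => .letret y (substC w x e₁) (if y = x then e₂ else substC w x e₂)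
  | .name f => .name f
  | .matchPair v y z e =>
      .matchPair (substV w x v) y z (if y = x ∨ z = x then e else substC w x e)
  | .matchUnit v e => .matchUnit (substV w x v) (substC w x e)
  | .matchSum v B => .matchSum (substV w x v) (substBr w x B)
  | .force v => .force (substV w x v)

def substRec (w : Val) (x : Var) : List (Label × Comp) → List (Label × Comp)
  | [] => []
  | (l, e) :: rest => (l, substC w x e) :: substRec w x rest

def substBr (w : Val) (x : Var) : List (Label × Var × Comp) → List (Label × Var × Comp)
  | [] => []
  | (l, y, e) :: rest =>
      (l, y, if y = x then e else substC w x e) :: substBr w x rest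
end

/-- Terminal computations. -/
inductive Terminal : Comp → Prop where
  | lam    : Terminal (.lam x e)
  | record : Terminal (.record L)
  | ret    : Terminal (.ret v)

/-- Small-step dynamics of call-by-push-value, relative to a signature. -/
inductive Step (Sg : Signature) : Comp → Comp → Prop where
  | beta       : Step Sg (.app (.lam x e) v) (substC v x e)
  | app        : Step Sg e e' → Step Sg (.app e v) (.app e' v)
  | letretBeta : Step Sg (.letret x (.ret v) e₂) (substC v x e₂)
  | letretStep : Step Sg e₁ e₁' → Step Sg (.letret x e₁ e₂) (.letret x e₁' e₂)
  | projBeta   : L.lookup j = some e → Step Sg (.proj (.record L) j) e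
  | projStep   : Step Sg e e' → Step Sg (.proj e j) (.proj e' j)
  | matchPair  : Step Sg (.matchPair (.pair v₁ v₂) x y e) (substC v₁ x (substC v₂ y e))
  | matchUnit  : Step Sg (.matchUnit .unit e) e
  | matchSum   : B.lookup j = some (x, ej) → Step Sg (.matchSum (.inj j v) B) (substC v x ej)
  | force      : Step Sg (.force (.thunk e)) e
  | name       : Sg.defs f = (σ, e) → Step Sg (.name f) e

end CBPV

namespace CBPV

/-- Unfold a positive type to a structural type using the signature
(equirecursive type definitions). -/
def unfP (Sg : Signature) : PosTp → PosStr
  | .name t => Sg.pos t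
  | .str τ => τ

/-- Unfold a negative type to a structural type using the signature. -/
def unfN (Sg : Signature) : NegTp → NegStr
  | .name s => Sg.neg s
  | .str σ => σ

/-- Step-indexed semantic typing of values against structural positive types,
parametrized by the semantic typing `SC` of computations (at the same index). -/
def SemValS (Sg : Signature) (SC : Comp → NegTp → Prop) : Val → PosStr → Prop
  | .pair v₁ v₂, .tensor τ₁ τ₂ =>
      SemValS Sg SC v₁ (unfP Sg τ₁) ∧ SemValS Sg SC v₂ (unfP Sg τ₂)
  | .unit, .one => True
  | .inj j v, .plus L => ∃ τ, L.lookup j = some τ ∧ SemValS Sg SC v (unfP Sg τ)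
  | .thunk e, .down σ => SC e σ
  | _, _ => False

mutual
/-- `SemComp Sg k e σ` is the step-indexed semantic typing `e ∈_k σ⁻`:
`e ∈_0 σ⁻` always, and `e ∈_{k+1} σ⁻` iff either `e ↦ e'` with `e' ∈_k σ⁻`,
or `e` is terminal and `e ∈⊛_{k+1} σ⁻`. -/
def SemComp (Sg : Signature) : ℕ → Comp → NegTp → Prop
  | 0, _, _ => True
  | k+1, e, σ =>
      (∃ e', Step Sg e e' ∧ SemComp Sg k e' σ) ∨
      (Terminal e ∧ SemTerm Sg (k+1) e σ)
termination_by k e σ => (k, 1)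

/-- `SemTerm Sg (k+1) e σ` is the semantic typing `e ∈⊛_{k+1} σ⁻` of terminal
computations.  Since applications `e v` and projections `e.j` are never
terminal, the requirements `e v ∈_{k+1} σ` and `e.j ∈_{k+1} σ_j` are stated in
their (equivalent) unfolded form: the application/projection takes a step to a
computation in the type at index `k`. -/
def SemTerm (Sg : Signature) : ℕ → Comp → NegTp → Prop
  | 0, _, _ => True
  | k+1, e, σ =>
      match unfN Sg σ with
      | .arrow τ σ₂ =>
          ∀ i, i ≤ k → ∀ v, SemValS Sg (SemComp Sg i) v (unfP Sg τ) →
            ∃ e'', Step Sg (.app e v) e'' ∧ SemComp Sg k e'' σ₂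
      | .withRec K =>
          ∀ j σj, K.lookup j = some σj →
            ∃ e'', Step Sg (.proj e j) e'' ∧ SemComp Sg k e'' σj
      | .up τ => ∃ v, e = .ret v ∧ SemValS Sg (SemComp Sg k) v (unfP Sg τ)
termination_by k e σ => (k, 0)
end

/-- `v ∈_k τ⁺`: step-indexed semantic typing of values. -/
def SemVal (Sg : Signature) (k : ℕ) (v : Val) (τ : PosTp) : Prop :=
  SemValS Sg (SemComp Sg k) v (unfP Sg τ)

/-- `v ∈ τ⁺`: semantic typing of values (at every step index). -/
def SemValAll (Sg : Signature) (v : Val) (τ : PosTp) : Prop :=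
  ∀ k, SemVal Sg k v τ

/-- `e ∈ σ⁻`: semantic typing of computations (at every step index). -/
def SemCompAll (Sg : Signature) (e : Comp) (σ : NegTp) : Prop :=
  ∀ k, SemComp Sg k e σ

end CBPV

namespace CBPV

def PosTp.IsName : PosTp → Prop := fun τ => ∃ t, τ = .name t
def NegTp.IsName : NegTp → Prop := fun σ => ∃ s, σ = .name s

/-- A structural positive type is in normal form if all of its components are
type names, and its label lists have no duplicate labels. -/
def PosStrNormal : PosStr → Prop
  | .tensor τ₁ τ₂ => τ₁.IsName ∧ τ₂.IsName
  | .one => True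
  | .plus L => (∀ p ∈ L, (Prod.snd p).IsName) ∧ (L.map Prod.fst).Nodup
  | .down σ => σ.IsName

def NegStrNormal : NegStr → Prop
  | .arrow τ σ => τ.IsName ∧ σ.IsName
  | .withRec L => (∀ p ∈ L, (Prod.snd p).IsName) ∧ (L.map Prod.fst).Nodup
  | .up τ => τ.IsName

/-- A signature is in normal form when every type definition alternates between
type names and structural types, i.e. the components of every defined
structural type are themselves type names. -/
def SigNormal (Sg : Signature) : Prop :=
  (∀ t, PosStrNormal (Sg.pos t)) ∧ (∀ s, NegStrNormal (Sg.neg s))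

/-- One unfolding of the rules for the emptiness judgment `t empty`. -/
def EmptyUnf (Sg : Signature) (S : String → Prop) (t : String) : Prop :=
  (∃ L, Sg.pos t = .plus L ∧
     ∀ p ∈ L, ∃ tj, Prod.snd p = PosTp.name tj ∧ S tj) ∨
  (∃ t₁ t₂, Sg.pos t = .tensor (.name t₁) (.name t₂) ∧ (S t₁ ∨ S t₂))

/-- `t empty`: the greatest fixed point (circular derivations) of the
emptiness rules. -/
def TpEmpty (Sg : Signature) (t : String) : Prop :=
  ∃ S : String → Prop, (∀ u, S u → EmptyUnf Sg S u) ∧ S t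

/-- `s full`: `s = t₁ → s₂ ∈ Σ` with `t₁ empty`, or `s = &{} ∈ Σ`. -/
def TpFull (Sg : Signature) (s : String) : Prop :=
  (∃ t₁ s₂, Sg.neg s = .arrow (.name t₁) (.name s₂) ∧ TpEmpty Sg t₁) ∨
  Sg.neg s = .withRec []

/-- One unfolding of the rules for positive subtyping `t ≤ u` between
positive type names. -/
def PosSubUnf (Sg : Signature) (P N : String → String → Prop) (t u : String) : Prop :=
  (∃ t₁ t₂ u₁ u₂, Sg.pos t = .tensor (.name t₁) (.name t₂) ∧
     Sg.pos u = .tensor (.name u₁) (.name u₂) ∧ P t₁ u₁ ∧ P t₂ u₂) ∨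
  (Sg.pos t = .one ∧ Sg.pos u = .one) ∨
  (∃ L K, Sg.pos t = .plus L ∧ Sg.pos u = .plus K ∧
     ∀ p ∈ L, ∃ tj, Prod.snd p = PosTp.name tj ∧
       (TpEmpty Sg tj ∨ ∃ uj, K.lookup (Prod.fst p) = some (PosTp.name uj) ∧ P tj uj)) ∨
  (∃ s r, Sg.pos t = .down (.name s) ∧ Sg.pos u = .down (.name r) ∧ N s r) ∨
  TpEmpty Sg t

/-- One unfolding of the rules for negative subtyping `s ≤ r` between
negative type names. -/
def NegSubUnf (Sg : Signature) (P N : String → String → Prop) (s r : String) : Prop :=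
  (∃ t₁ s₂ u₁ r₂, Sg.neg s = .arrow (.name t₁) (.name s₂) ∧
     Sg.neg r = .arrow (.name u₁) (.name r₂) ∧ P u₁ t₁ ∧ N s₂ r₂) ∨
  (∃ t u, Sg.neg s = .up (.name t) ∧ Sg.neg r = .up (.name u) ∧ P t u) ∨
  (∃ L K, Sg.neg s = .withRec L ∧ Sg.neg r = .withRec K ∧
     ∀ p ∈ K, ∃ rj, Prod.snd p = NegTp.name rj ∧
       ∃ sj, L.lookup (Prod.fst p) = some (NegTp.name sj) ∧ N sj rj) ∨
  (∃ t, Sg.neg s = .up (.name t) ∧ TpEmpty Sg t) ∨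
  TpFull Sg r

/-- `t ≤ u`: syntactic subtyping between positive type names, interpreted as
circular derivations (greatest fixed point of the subtyping rules). -/
def PosSub (Sg : Signature) (t u : String) : Prop :=
  ∃ P N : String → String → Prop,
    (∀ a b, P a b → PosSubUnf Sg P N a b) ∧
    (∀ a b, N a b → NegSubUnf Sg P N a b) ∧ P t u

/-- `s ≤ r`: syntactic subtyping between negative type names, interpreted as
circular derivations (greatest fixed point of the subtyping rules). -/
def NegSub (Sg : Signature) (s r : String) : Prop :=
  ∃ P N : String → String → Prop,
    (∀ a b, P a b → PosSubUnf Sg P N a b) ∧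
    (∀ a b, N a b → NegSubUnf Sg P N a b) ∧ N s r

end CBPV

namespace CBPV

/-- Semantic subtyping between positive type names: every semantically typed
value of `t` is a semantically typed value of `u`. -/
def SemSubPos (Sg : Signature) (t u : String) : Prop :=
  ∀ v : Val, SemValAll Sg v (.name t) → SemValAll Sg v (.name u)

/-- Semantic subtyping between negative type names. -/
def SemSubNeg (Sg : Signature) (s r : String) : Prop :=
  ∀ e : Comp, SemCompAll Sg e (.name s) → SemCompAll Sg e (.name r)

theorem lookup_mem {α β : Type} [BEq α] [LawfulBEq α] {l : List (α × β)} {a : α} {b : β}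
    (h : l.lookup a = some b) : (a, b) ∈ l := by
  induction l with
  | nil => simp [List.lookup] at h
  | cons p rest ih =>
    obtain ⟨k, v⟩ := p
    rw [List.lookup] at h
    by_cases hk : a = k
    · subst hk; simp at h; subst h; exact List.mem_cons_self
    · have : (a == k) = false := beq_false_of_ne hk
      rw [this] at h
      exact List.mem_cons_of_mem _ (ih h)

theorem empty_no_val (Sg : Signature) (S : String → Prop)
    (hS : ∀ u, S u → EmptyUnf Sg S u) :
    ∀ (v : Val) (SC : Comp → NegTp → Prop) (t : String), S t →
      SemValS Sg SC v (Sg.pos t) → False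
  | .pair v₁ v₂, SC, t, hSt, hv => by
    rcases hS t hSt with ⟨L, hL, _⟩ | ⟨t₁, t₂, heq, hor⟩
    · rw [hL] at hv; simp [SemValS] at hv
    · rw [heq] at hv
      simp only [SemValS, unfP] at hv
      rcases hor with h | h
      · exact empty_no_val Sg S hS v₁ SC t₁ h hv.1
      · exact empty_no_val Sg S hS v₂ SC t₂ h hv.2
  | .inj j w, SC, t, hSt, hv => by
    rcases hS t hSt with ⟨L, hL, hall⟩ | ⟨t₁, t₂, heq, _⟩
    · rw [hL] at hv
      simp only [SemValS] at hv
      obtain ⟨τ, hlk, hw⟩ := hv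
      obtain ⟨tj, hτ, hStj⟩ := hall (j, τ) (lookup_mem hlk)
      simp only at hτ; subst hτ
      exact empty_no_val Sg S hS w SC tj hStj hw
    · rw [heq] at hv; simp [SemValS] at hv
  | .var x, SC, t, hSt, hv => by
    rcases hS t hSt with ⟨L, hL, _⟩ | ⟨t₁, t₂, heq, _⟩ <;> simp_all [SemValS]
  | .unit, SC, t, hSt, hv => by
    rcases hS t hSt with ⟨L, hL, _⟩ | ⟨t₁, t₂, heq, _⟩ <;> simp_all [SemValS]
  | .thunk e, SC, t, hSt, hv => by
    rcases hS t hSt with ⟨L, hL, _⟩ | ⟨t₁, t₂, heq, _⟩ <;> simp_all [SemValS]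

theorem tpEmpty_no_val {Sg : Signature} {t : String} (h : TpEmpty Sg t)
    (v : Val) (SC : Comp → NegTp → Prop) : ¬ SemValS Sg SC v (Sg.pos t) := by
  obtain ⟨S, hS, hSt⟩ := h
  exact fun hv => empty_no_val Sg S hS v SC t hSt hv

theorem full_semcomp (Sg : Signature) {r : String} (h : TpFull Sg r) :
    ∀ (k : ℕ) (e : Comp) (σ : NegTp), SemComp Sg k e σ → SemComp Sg k e (.name r) := by
  intro k
  induction k with
  | zero => intro e σ _; rw [SemComp]; trivial
  | succ j ih =>
    intro e σ he
    rw [SemComp] at he ⊢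
    rcases he with ⟨e', hst, he'⟩ | ⟨hterm, _⟩
    · exact Or.inl ⟨e', hst, ih e' σ he'⟩
    · refine Or.inr ⟨hterm, ?_⟩
      rw [SemTerm]
      rcases h with ⟨t₁, s₂, heq, hemp⟩ | heq
      · simp only [unfN, heq]
        intro i _ v hv
        exact absurd hv (tpEmpty_no_val hemp v (SemComp Sg i))
      · simp only [unfN, heq]
        intro j' σj hlk
        simp [List.lookup] at hlk

theorem upEmpty_semcomp (Sg : Signature) {s t : String}
    (heq : Sg.neg s = .up (.name t)) (hemp : TpEmpty Sg t) :
    ∀ (k : ℕ) (e : Comp) (σ' : NegTp), SemComp Sg k e (.name s) → SemComp Sg k e σ' := by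
  intro k
  induction k with
  | zero => intro e σ' _; rw [SemComp]; trivial
  | succ j ih =>
    intro e σ' he
    rw [SemComp] at he ⊢
    rcases he with ⟨e', hst, he'⟩ | ⟨_, hT⟩
    · exact Or.inl ⟨e', hst, ih e' σ' he'⟩
    · rw [SemTerm] at hT
      simp only [unfN, heq] at hT
      obtain ⟨v, _, hv⟩ := hT
      exact absurd hv (tpEmpty_no_val hemp v (SemComp Sg j))

theorem posStep (Sg : Signature) (P N : String → String → Prop)
    (hPc : ∀ a b, P a b → PosSubUnf Sg P N a b)
    (hNc : ∀ a b, N a b → NegSubUnf Sg P N a b) (k : ℕ)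
    (negk : ∀ a b, N a b → ∀ e, SemComp Sg k e (.name a) → SemComp Sg k e (.name b)) :
    ∀ (v : Val) (a b : String), P a b →
      SemValS Sg (SemComp Sg k) v (Sg.pos a) → SemValS Sg (SemComp Sg k) v (Sg.pos b)
  | .pair v₁ v₂, a, b, hab, hv => by
    rcases hPc a b hab with ⟨t₁,t₂,u₁,u₂,ha,hb,h1,h2⟩ | ⟨ha,_⟩ | ⟨L,K,ha,_,_⟩ | ⟨s,r,ha,_,_⟩ | hemp
    · rw [ha] at hv; rw [hb]
      simp only [SemValS, unfP] at hv ⊢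
      exact ⟨posStep Sg P N hPc hNc k negk v₁ t₁ u₁ h1 hv.1,
             posStep Sg P N hPc hNc k negk v₂ t₂ u₂ h2 hv.2⟩
    · rw [ha] at hv; simp [SemValS] at hv
    · rw [ha] at hv; simp [SemValS] at hv
    · rw [ha] at hv; simp [SemValS] at hv
    · exact absurd hv (tpEmpty_no_val hemp _ _)
  | .unit, a, b, hab, hv => by
    rcases hPc a b hab with ⟨t₁,t₂,u₁,u₂,ha,_,_,_⟩ | ⟨ha,hb⟩ | ⟨L,K,ha,_,_⟩ | ⟨s,r,ha,_,_⟩ | hemp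
    · rw [ha] at hv; simp [SemValS] at hv
    · rw [hb]; simp [SemValS]
    · rw [ha] at hv; simp [SemValS] at hv
    · rw [ha] at hv; simp [SemValS] at hv
    · exact absurd hv (tpEmpty_no_val hemp _ _)
  | .inj j w, a, b, hab, hv => by
    rcases hPc a b hab with ⟨t₁,t₂,u₁,u₂,ha,_,_,_⟩ | ⟨ha,_⟩ | ⟨L,K,ha,hb,hall⟩ | ⟨s,r,ha,_,_⟩ | hemp
    · rw [ha] at hv; simp [SemValS] at hv
    · rw [ha] at hv; simp [SemValS] at hv
    · rw [ha] at hv; rw [hb]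
      simp only [SemValS] at hv ⊢
      obtain ⟨τ, hlk, hw⟩ := hv
      obtain ⟨tj, hτ, hcase⟩ := hall (j, τ) (lookup_mem hlk)
      simp only at hτ; subst hτ
      rcases hcase with hemp | ⟨uj, hlk', hP⟩
      · exact absurd hw (tpEmpty_no_val hemp _ _)
      · exact ⟨.name uj, hlk', posStep Sg P N hPc hNc k negk w tj uj hP hw⟩
    · rw [ha] at hv; simp [SemValS] at hv
    · exact absurd hv (tpEmpty_no_val hemp _ _)
  | .thunk e, a, b, hab, hv => by
    rcases hPc a b hab with ⟨t₁,t₂,u₁,u₂,ha,_,_,_⟩ | ⟨ha,_⟩ | ⟨L,K,ha,_,_⟩ | ⟨s,r,ha,hb,hsr⟩ | hemp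
    · rw [ha] at hv; simp [SemValS] at hv
    · rw [ha] at hv; simp [SemValS] at hv
    · rw [ha] at hv; simp [SemValS] at hv
    · rw [ha] at hv; rw [hb]
      simp only [SemValS] at hv ⊢
      exact negk s r hsr e hv
    · exact absurd hv (tpEmpty_no_val hemp _ _)
  | .var x, a, b, hab, hv => by
    rcases hPc a b hab with ⟨t₁,t₂,u₁,u₂,ha,_,_,_⟩ | ⟨ha,_⟩ | ⟨L,K,ha,_,_⟩ | ⟨s,r,ha,_,_⟩ | hemp
    · rw [ha] at hv; simp [SemValS] at hv
    · rw [ha] at hv; simp [SemValS] at hv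
    · rw [ha] at hv; simp [SemValS] at hv
    · rw [ha] at hv; simp [SemValS] at hv
    · exact absurd hv (tpEmpty_no_val hemp _ _)

theorem negStep (Sg : Signature) (P N : String → String → Prop)
    (hPc : ∀ a b, P a b → PosSubUnf Sg P N a b)
    (hNc : ∀ a b, N a b → NegSubUnf Sg P N a b) : ∀ k : ℕ,
    ∀ a b, N a b → ∀ e, SemComp Sg k e (.name a) → SemComp Sg k e (.name b) := by
  intro k
  induction k using Nat.strong_induction_on with
  | _ k ih =>
    match k with
    | 0 => intro a b _ e _; rw [SemComp]; trivial
    | Nat.succ j =>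
      intro a b hab e he
      rcases hNc a b hab with ⟨t₁,s₂,u₁,r₂,ha,hb,hP,hN2⟩ | ⟨t,u,ha,hb,hP⟩ |
        ⟨L,K,ha,hb,hall⟩ | ⟨t,ha,hemp⟩ | hfull
      · rw [SemComp] at he ⊢
        rcases he with ⟨e', hst, he'⟩ | ⟨hterm, hT⟩
        · exact Or.inl ⟨e', hst, ih j (Nat.lt_succ_self j) a b hab e' he'⟩
        · refine Or.inr ⟨hterm, ?_⟩
          rw [SemTerm] at hT ⊢
          simp only [unfN, ha] at hT
          simp only [unfN, hb]
          intro i hi v hv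
          have hv' : SemValS Sg (SemComp Sg i) v (Sg.pos t₁) :=
            posStep Sg P N hPc hNc i
              (ih i (Nat.lt_succ_of_le hi)) v u₁ t₁ hP hv
          obtain ⟨e'', hst, he''⟩ := hT i hi v hv'
          exact ⟨e'', hst, ih j (Nat.lt_succ_self j) s₂ r₂ hN2 e'' he''⟩
      · rw [SemComp] at he ⊢
        rcases he with ⟨e', hst, he'⟩ | ⟨hterm, hT⟩
        · exact Or.inl ⟨e', hst, ih j (Nat.lt_succ_self j) a b hab e' he'⟩
        · refine Or.inr ⟨hterm, ?_⟩
          rw [SemTerm] at hT ⊢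
          simp only [unfN, ha] at hT
          simp only [unfN, hb]
          obtain ⟨v, hret, hv⟩ := hT
          exact ⟨v, hret, posStep Sg P N hPc hNc j
            (ih j (Nat.lt_succ_self j)) v t u hP hv⟩
      · rw [SemComp] at he ⊢
        rcases he with ⟨e', hst, he'⟩ | ⟨hterm, hT⟩
        · exact Or.inl ⟨e', hst, ih j (Nat.lt_succ_self j) a b hab e' he'⟩
        · refine Or.inr ⟨hterm, ?_⟩
          rw [SemTerm] at hT ⊢
          simp only [unfN, ha] at hT
          simp only [unfN, hb]
          intro j' σj hlk
          obtain ⟨rj, hσj, sj, hlkL, hNsr⟩ := hall (j', σj) (lookup_mem hlk)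
          simp only at hσj; subst hσj
          obtain ⟨e'', hst, he''⟩ := hT j' (.name sj) hlkL
          exact ⟨e'', hst, ih j (Nat.lt_succ_self j) sj rj hNsr e'' he''⟩
      · exact upEmpty_semcomp Sg ha hemp _ e _ he
      · exact full_semcomp Sg hfull _ e _ he

/-- Soundness of syntactic subtyping:
(1) if `t ≤ u` (as a circular derivation) then for all `k` and `v`, `v ∈_k t`
implies `v ∈_k u`, and hence `t ⊆ u` semantically;
(2) if `s ≤ r` then for all `k` and `e`, `e ∈_k s` implies `e ∈_k r`, and
hence `s ⊆ r` semantically. -/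
theorem subtyping_sound (Sg : Signature) (hN : SigNormal Sg) :
    (∀ t u : String, PosSub Sg t u →
      (∀ (k : ℕ) (v : Val), SemVal Sg k v (.name t) → SemVal Sg k v (.name u)) ∧
      SemSubPos Sg t u) ∧
    (∀ s r : String, NegSub Sg s r →
      (∀ (k : ℕ) (e : Comp), SemComp Sg k e (.name s) → SemComp Sg k e (.name r)) ∧
      SemSubNeg Sg s r) := by
  constructor
  · rintro t u ⟨P, N, hPc, hNc, hPtu⟩
    have main : ∀ (k : ℕ) (v : Val), SemVal Sg k v (.name t) → SemVal Sg k v (.name u) :=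
      fun k v hv =>
        posStep Sg P N hPc hNc k (negStep Sg P N hPc hNc k) v t u hPtu hv
    exact ⟨main, fun v hv k => main k v (hv k)⟩
  · rintro s r ⟨P, N, hPc, hNc, hNsr⟩
    have main : ∀ (k : ℕ) (e : Comp), SemComp Sg k e (.name s) → SemComp Sg k e (.name r) :=
      fun k e he => negStep Sg P N hPc hNc k s r hNsr e he
    exact ⟨main, fun e he k => main k e (he k)⟩


end CBPV
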